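/- Let (M, dist) be a metric space, let a = (a_1, ..., a_K) be real weights with A⁰ := Σ_j a_j > 0, let A⁺ be the sum of the positive weights and A⁻ the sum of the absolute values of the negative weights. Suppose all points u_1, ..., u_K lie in the closed ball B(x, r). Then every minimizer v* of the function v ↦ Σ_j a_j · dist(v, u_j)² lies in the closed ball B(x, R) with R = 2(A⁺ + A⁻)/A⁰ · r. -/

import Mathlib

open Finset

/-- every minimizer of the weighted sum of squared distances for points
in `B(x,r)` lies in `B(x, 2(A⁺+A⁻)/A⁰ · r)`. -/
theorem minimizer_in_ball {M : Type*} [MetricSpace M] {K : ℕ}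
    (a : Fin K → ℝ) (u : Fin K → M) (x : M) (r : ℝ) (hr : 0 ≤ r)
    (hball : ∀ j, dist (u j) x ≤ r)
    (hA0 : 0 < ∑ j, a j)
    (vstar : M)
    (hmin : ∀ v : M, ∑ j, a j * dist vstar (u j) ^ 2 ≤ ∑ j, a j * dist v (u j) ^ 2) :
    dist vstar x ≤
      2 * ((∑ j ∈ univ.filter fun j => 0 < a j, a j)
            + ∑ j ∈ univ.filter fun j => a j < 0, |a j|) / (∑ j, a j) * r := by
  set A0 := ∑ j, a j with hA0def
  set Ap := ∑ j ∈ univ.filter fun j => 0 < a j, a j with hApdef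
  set Am := ∑ j ∈ univ.filter fun j => a j < 0, |a j| with hAmdef
  have hAp0 : 0 ≤ Ap := sum_nonneg fun j hj => le_of_lt (mem_filter.mp hj).2
  have hAm0 : 0 ≤ Am := sum_nonneg fun j _ => abs_nonneg _
  have hsplit : A0 = Ap - Am := by
    rw [hA0def, hApdef, hAmdef, sum_filter, sum_filter, ← sum_sub_distrib]
    refine sum_congr rfl fun j _ => ?_
    rcases lt_trichotomy (a j) 0 with h | h | h
    · simp [h, not_lt.mpr h.le, abs_of_neg h]
    · simp [h]
    · simp [h, not_lt.mpr h.le]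
  set D := dist vstar x with hDdef
  have hD0 : 0 ≤ D := dist_nonneg
  by_cases hD : D ≤ 2 * r
  · -- easy case: the radius is at least 2r
    have h1 : 2 * r ≤ 2 * (Ap + Am) / A0 * r := by
      rw [div_mul_eq_mul_div, le_div_iff₀ hA0]
      nlinarith [hsplit, hAm0, hr, hA0]
    linarith
  · push_neg at hD
    have hDpos : 0 < D := lt_of_le_of_lt (by linarith) hD
    -- pointwise bound
    have hpt : ∀ j : Fin K,
        a j * (D * (D - 2 * r)) - (if a j < 0 then |a j| * (4 * D * r) else 0)
          ≤ a j * dist vstar (u j) ^ 2 - a j * dist x (u j) ^ 2 := by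
      intro j
      set d := dist vstar (u j) with hd
      set e := dist x (u j) with he
      have hd0 : 0 ≤ d := dist_nonneg
      have he0 : 0 ≤ e := dist_nonneg
      have her : e ≤ r := by rw [he, dist_comm]; exact hball j
      have htr1 : d ≤ D + e := by
        rw [hd, he, hDdef]; exact dist_triangle vstar x (u j)
      have htr2 : D ≤ d + e := by
        rw [hd, he, hDdef]
        calc dist vstar x ≤ dist vstar (u j) + dist (u j) x := dist_triangle _ _ _
          _ = d + e := by rw [hd, he, dist_comm x (u j)]
      have hlow : D * (D - 2 * r) ≤ d ^ 2 - e ^ 2 := by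
        nlinarith [htr2, her, he0, hd0, hD]
      have hhigh : d ^ 2 - e ^ 2 ≤ D * (D + 2 * r) := by
        nlinarith [htr1, her, he0, hd0, hD0, hr]
      by_cases ha : a j < 0
      · simp only [if_pos ha]
        have : |a j| = -a j := abs_of_neg ha
        rw [this]
        nlinarith [hhigh, ha]
      · simp only [if_neg ha]
        push_neg at ha
        nlinarith [hlow, ha]
    have hsum : A0 * (D * (D - 2 * r)) - Am * (4 * D * r) ≤ 0 := by
      have h1 : ∑ j, (a j * (D * (D - 2 * r)) - (if a j < 0 then |a j| * (4 * D * r) else 0))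
          ≤ ∑ j, (a j * dist vstar (u j) ^ 2 - a j * dist x (u j) ^ 2) :=
        sum_le_sum fun j _ => hpt j
      have h2 : ∑ j, (a j * dist vstar (u j) ^ 2 - a j * dist x (u j) ^ 2) ≤ 0 := by
        rw [sum_sub_distrib]
        have := hmin x
        linarith
      have h3 : ∑ j, (a j * (D * (D - 2 * r)) - (if a j < 0 then |a j| * (4 * D * r) else 0))
          = A0 * (D * (D - 2 * r)) - Am * (4 * D * r) := by
        rw [sum_sub_distrib, ← sum_mul]
        congr 1
        rw [hAmdef, sum_mul, sum_filter]
      linarith [h1, h2, h3.symm.le]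
    -- divide by D > 0
    have h2 : (A0 * (D - 2 * r)) * D ≤ (Am * (4 * r)) * D := by nlinarith [hsum]
    have h3 : A0 * (D - 2 * r) ≤ Am * (4 * r) := le_of_mul_le_mul_right h2 hDpos
    have hA0r : A0 * r = Ap * r - Am * r := by rw [hsplit]; ring
    rw [div_mul_eq_mul_div, le_div_iff₀ hA0]
    nlinarith [h3, hA0r]
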